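/- For a norm vector n^f ∈ ℝ³ with ‖n^f‖ = 1, scalar d^f, and p^r ∈ ℝ³, define the 9×9 block matrix A = [[I₃, 0, 0], [(p^r)^∧, I₃, 0], [d^f(n^f)^∧ − n^f(n^f)ᵀ(p^r)^∧, −n^f(n^f)ᵀ, I₃]]. Then A is invertible, and A times the 9×6 matrix N = [[0, I₃], [I₃, −(p^r)^∧], [n^f(n^f)ᵀ, −d^f(n^f)^∧]] equals the constant matrix [[0, I₃], [I₃, 0], [0, 0]]. -/

import Mathlib

open Matrix

/-- The skew-symmetric (cross-product) matrix of v ∈ ℝ³. -/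
def skew (v : Fin 3 → ℝ) : Matrix (Fin 3) (Fin 3) ℝ :=
  !![0, -v 2, v 1; v 2, 0, -v 0; -v 1, v 0, 0]

/-- The Aff-EKF affine transformation for plane-feature SLAM. -/
def affineAplane (nf : Fin 3 → ℝ) (df : ℝ) (pr : Fin 3 → ℝ) :
    Matrix (Fin 3 ⊕ (Fin 3 ⊕ Fin 3)) (Fin 3 ⊕ (Fin 3 ⊕ Fin 3)) ℝ :=
  Matrix.fromBlocks 1 0
    (Matrix.fromRows (skew pr) (df • skew nf - Matrix.vecMulVec nf nf * skew pr))
    (Matrix.fromBlocks 1 0 (-(Matrix.vecMulVec nf nf)) 1)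

/-- The unobservable-subspace basis of plane-feature SLAM in the standard atlas. -/
def unobsNplane (nf : Fin 3 → ℝ) (df : ℝ) (pr : Fin 3 → ℝ) :
    Matrix (Fin 3 ⊕ (Fin 3 ⊕ Fin 3)) (Fin 3 ⊕ Fin 3) ℝ :=
  Matrix.fromBlocks 0 1
    (Matrix.fromRows 1 (Matrix.vecMulVec nf nf))
    (Matrix.fromRows (-(skew pr)) (-(df • skew nf)))

/-- The constant matrix [[0,I],[I,0],[0,0]]. -/
def unobsNbarPlane : Matrix (Fin 3 ⊕ (Fin 3 ⊕ Fin 3)) (Fin 3 ⊕ Fin 3) ℝ :=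
  Matrix.fromBlocks 0 1 (Matrix.fromRows 1 0) (Matrix.fromRows 0 0)

/-- Adding two row-partitioned matrices adds their blocks. -/
lemma fromRows_add' {m₁ m₂ n : Type*} (A₁ : Matrix m₁ n ℝ) (A₂ : Matrix m₂ n ℝ)
    (B₁ : Matrix m₁ n ℝ) (B₂ : Matrix m₂ n ℝ) :
    Matrix.fromRows A₁ A₂ + Matrix.fromRows B₁ B₂ = Matrix.fromRows (A₁ + B₁) (A₂ + B₂) := by
  ext (i | i) j <;> simp

/-- For a unit normal n^f, A is invertible and A·N equals the constant matrix
[[0,I],[I,0],[0,0]]. -/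
theorem affine_plane_renders_unobservable_constant
    (nf : Fin 3 → ℝ) (hn : nf ⬝ᵥ nf = 1) (df : ℝ) (pr : Fin 3 → ℝ) :
    IsUnit (affineAplane nf df pr) ∧
      affineAplane nf df pr * unobsNplane nf df pr = unobsNbarPlane := by
  set P := Matrix.vecMulVec nf nf with hP
  set C := Matrix.fromRows (skew pr) (df • skew nf - P * skew pr) with hC
  constructor
  · have hD : (Matrix.fromBlocks 1 0 (-P) 1 : Matrix (Fin 3 ⊕ Fin 3) (Fin 3 ⊕ Fin 3) ℝ) *
        Matrix.fromBlocks 1 0 P 1 = 1 := by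
      rw [Matrix.fromBlocks_multiply]
      simp [← Matrix.fromBlocks_one]
    have h1 : affineAplane nf df pr *
        Matrix.fromBlocks 1 0 (-(Matrix.fromBlocks 1 0 P 1 * C)) (Matrix.fromBlocks 1 0 P 1) = 1 := by
      rw [affineAplane, Matrix.fromBlocks_multiply, ← hC, ← hP]
      simp only [Matrix.mul_neg, ← Matrix.mul_assoc, hD, Matrix.one_mul, Matrix.mul_one,
        Matrix.mul_zero, Matrix.zero_mul, add_zero, zero_add, add_neg_cancel, neg_zero]
      convert Matrix.fromBlocks_one using 2
      rw [add_neg_eq_zero]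
      have e := Matrix.mul_assoc (Matrix.fromBlocks 1 0 (-P) 1 : Matrix (Fin 3 ⊕ Fin 3) (Fin 3 ⊕ Fin 3) ℝ)
        (Matrix.fromBlocks 1 0 P 1) C
      rw [hD, Matrix.one_mul] at e
      exact e
    exact ⟨⟨_, _, h1, mul_eq_one_comm.mp h1⟩, rfl⟩
  · rw [affineAplane, unobsNplane, unobsNbarPlane, Matrix.fromBlocks_multiply, ← hP, ← hC,
      Matrix.fromBlocks_mul_fromRows, Matrix.fromBlocks_mul_fromRows, Matrix.fromBlocks_inj]
    refine ⟨by simp, by simp, ?_, ?_⟩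
    · simp only [Matrix.mul_zero, Matrix.one_mul, Matrix.zero_mul, Matrix.mul_one,
        zero_add, add_zero, Matrix.neg_mul, neg_add_cancel]
    · simp only [Matrix.mul_zero, Matrix.one_mul, Matrix.zero_mul, Matrix.mul_one,
        zero_add, add_zero, Matrix.neg_mul, Matrix.mul_neg, neg_neg, hC, Matrix.fromRows_mul]
      rw [fromRows_add', Matrix.fromRows_ext_iff]
      constructor <;> abel
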